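/- For every fixed ε with 0 < ε < 1, in the Erdős–Rényi random graph G(n, 1/2), the expected number of dominating sets of size p = ⌊(1−ε) log₂ n⌋ is C(n,p)·(1 − 2^{−p})^{n−p}, and this quantity tends to 0 as n → ∞. Consequently, asymptotically almost surely γ(G(n,1/2)) > (1−ε) log₂ n. -/

import Mathlib

open Finset

namespace SG

variable {V : Type*}

/-- Closed neighborhood of a vertex as a `Finset`. -/
def closedNbhd [Fintype V] [DecidableEq V] (G : SimpleGraph V) [DecidableRel G.Adj]
    (v : V) : Finset V :=
  insert v (G.neighborFinset v)

/-- A fractional domination: weights in `[0,1]` with each closed neighborhood of weight `≥ 1`. -/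
def IsFracDom [Fintype V] [DecidableEq V] (G : SimpleGraph V) [DecidableRel G.Adj]
    (f : V → ℝ) : Prop :=
  (∀ v, 0 ≤ f v ∧ f v ≤ 1) ∧ ∀ v, 1 ≤ ∑ u ∈ closedNbhd G v, f u

/-- The fractional domination number. -/
noncomputable def fracDomNumber [Fintype V] [DecidableEq V] (G : SimpleGraph V)
    [DecidableRel G.Adj] : ℝ :=
  sInf {x | ∃ f, IsFracDom G f ∧ x = ∑ v, f v}

/-- A dominating set: every vertex not in `S` is adjacent to some vertex of `S`. -/
def IsDomSet (G : SimpleGraph V) (S : Finset V) : Prop :=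
  ∀ v, v ∉ S → ∃ u ∈ S, G.Adj u v

/-- The domination number. -/
noncomputable def domNumber [Fintype V] (G : SimpleGraph V) : ℕ :=
  sInf {k | ∃ S : Finset V, S.card = k ∧ IsDomSet G S}



section Aux
variable {V : Type*} [Fintype V] [DecidableEq V]

open scoped Classical in
/-- Graphs as boolean functions on non-diagonal `Sym2`. -/
noncomputable def graphEquiv (V : Type*) [DecidableEq V] :
    SimpleGraph V ≃ ({e : Sym2 V // ¬ e.IsDiag} → Bool) where
  toFun G e := decide (e.1 ∈ G.edgeSet)
  invFun f := SimpleGraph.fromEdgeSet {e | ∃ h : ¬ e.IsDiag, f ⟨e, h⟩ = true}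
  left_inv G := by
    ext a b
    simp only [SimpleGraph.fromEdgeSet_adj, Set.mem_setOf_eq, Sym2.mk_isDiag_iff,
      decide_eq_true_eq, SimpleGraph.mem_edgeSet]
    constructor
    · rintro ⟨⟨-, h⟩, -⟩; exact h
    · intro h; exact ⟨⟨h.ne, h⟩, h.ne⟩
  right_inv f := by
    funext e
    obtain ⟨e, he⟩ := e
    induction e with
    | _ a b => simp [SimpleGraph.edgeSet_fromEdgeSet, he]

/-- An edge crosses `S` if it has one endpoint in `S` and the other outside. -/
def Cross (S : Finset V) (e : {e : Sym2 V // ¬ e.IsDiag}) : Prop :=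
  ∃ u ∈ S, ∃ v ∈ Sᶜ, e.1 = s(u, v)

noncomputable def crossFun (S : Finset V) (x : ↥(Sᶜ) × ↥S) : {e // Cross S e} :=
  ⟨⟨s(x.2.1, x.1.1), by
      simp only [Sym2.mk_isDiag_iff]
      intro h
      have := x.1.2
      rw [Finset.mem_compl, ← h] at this
      exact this x.2.2⟩,
    ⟨x.2.1, x.2.2, x.1.1, x.1.2, rfl⟩⟩

theorem crossFun_bijective (S : Finset V) : Function.Bijective (crossFun S) := by
  constructor
  · rintro ⟨⟨v, hv⟩, ⟨u, hu⟩⟩ ⟨⟨v', hv'⟩, ⟨u', hu'⟩⟩ h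
    simp only [crossFun, Subtype.ext_iff, Sym2.eq_iff] at h
    rw [Finset.mem_compl] at hv hv'
    rcases h with ⟨rfl, rfl⟩ | ⟨rfl, rfl⟩
    · rfl
    · exact absurd hu hv'
  · rintro ⟨⟨e, he⟩, u, hu, v, hv, hev⟩
    simp only at hev
    subst hev
    exact ⟨(⟨v, hv⟩, ⟨u, hu⟩), rfl⟩

noncomputable def crossEquiv (S : Finset V) : (↥(Sᶜ) × ↥S) ≃ {e // Cross S e} :=
  Equiv.ofBijective _ (crossFun_bijective S)

open scoped Classical in
/-- Decomposition of a graph into its cross edges w.r.t. `S` and the rest. -/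
noncomputable def domEquiv (S : Finset V) :
    SimpleGraph V ≃ ((↥(Sᶜ) × ↥S → Bool) × ({e // ¬ Cross S e} → Bool)) :=
  (graphEquiv V).trans <|
    ((Equiv.sumCompl (Cross S)).symm.arrowCongr (Equiv.refl Bool)).trans <|
      (Equiv.sumArrowEquivProdArrow _ _ _).trans <|
        Equiv.prodCongr ((crossEquiv S).symm.arrowCongr (Equiv.refl Bool)) (Equiv.refl _)

open scoped Classical in
theorem domEquiv_fst (S : Finset V) (G : SimpleGraph V) (x : ↥(Sᶜ) × ↥S) :
    (domEquiv S G).1 x = true ↔ G.Adj x.2.1 x.1.1 := by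
  simp [domEquiv, Equiv.sumArrowEquivProdArrow, crossEquiv, crossFun, graphEquiv]

set_option linter.unusedSectionVars false in
theorem card_exists_true (S : Finset V) :
    Nat.card {k : ↥S → Bool // ∃ u, k u = true} = 2 ^ S.card - 1 := by
  classical
  rw [Nat.card_eq_fintype_card]
  have h1 : Fintype.card {k : ↥S → Bool // ¬ ∃ u, k u = true} = 1 := by
    rw [Fintype.card_eq_one_iff]
    refine ⟨⟨fun _ => false, by simp⟩, ?_⟩
    rintro ⟨k, hk⟩
    ext u
    simp only [not_exists, Bool.not_eq_true] at hk
    simp [hk u]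
  have h3 : Fintype.card (↥S → Bool) = 2 ^ S.card := by
    rw [Fintype.card_fun, Fintype.card_bool, Fintype.card_coe]
  have h2 : (1 : ℕ) = 2 ^ S.card - Fintype.card {k : ↥S → Bool // ∃ u, k u = true} := by
    rw [← h1, Fintype.card_subtype_compl, h3]
  have h4 : Fintype.card {k : ↥S → Bool // ∃ u, k u = true} ≤ 2 ^ S.card := by
    rw [← h3]; exact Fintype.card_subtype_le _
  generalize hA : Fintype.card {k : ↥S → Bool // ∃ u, k u = true} = a at h2 h4 ⊢
  generalize hB : 2 ^ S.card = b at h2 h4 ⊢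
  clear h1 h3 hA hB
  omega

theorem card_good (S : Finset V) :
    Nat.card {g : ↥(Sᶜ) × ↥S → Bool // ∀ v, ∃ u, g (v, u) = true}
      = (2 ^ S.card - 1) ^ (Sᶜ).card := by
  classical
  have e1 : {g : ↥(Sᶜ) × ↥S → Bool // ∀ v, ∃ u, g (v, u) = true}
      ≃ ∀ _v : ↥(Sᶜ), {k : ↥S → Bool // ∃ u, k u = true} :=
    ((Equiv.curry _ _ _).subtypeEquiv (fun g => by simp [Equiv.curry])).trans
      Equiv.subtypePiEquivPi
  rw [Nat.card_congr e1, Nat.card_pi, Finset.prod_const, card_exists_true,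
    Finset.card_univ, Fintype.card_coe]

theorem card_dom (S : Finset V) :
    Nat.card {G : SimpleGraph V // IsDomSet G S}
      = (2 ^ S.card - 1) ^ (Sᶜ).card
          * 2 ^ ((Fintype.card V).choose 2 - (Sᶜ).card * S.card) := by
  classical
  have key : ∀ G : SimpleGraph V,
      IsDomSet G S ↔ ∀ v : ↥(Sᶜ), ∃ u : ↥S, (domEquiv S G).1 (v, u) = true := by
    intro G
    simp only [domEquiv_fst]
    constructor
    · rintro h ⟨v, hv⟩
      obtain ⟨u, hu, hadj⟩ := h v (Finset.mem_compl.mp hv)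
      exact ⟨⟨u, hu⟩, hadj⟩
    · intro h v hv
      obtain ⟨⟨u, hu⟩, hadj⟩ := h ⟨v, Finset.mem_compl.mpr hv⟩
      exact ⟨u, hu, hadj⟩
  have e2 : {G : SimpleGraph V // IsDomSet G S}
      ≃ {g : ↥(Sᶜ) × ↥S → Bool // ∀ v, ∃ u, g (v, u) = true}
          × ({e // ¬ Cross S e} → Bool) :=
    ((domEquiv S).subtypeEquiv (fun G => by rw [key G])).trans
      (Equiv.prodSubtypeFstEquivSubtypeProd (p := fun (g : ↥(Sᶜ) × ↥S → Bool) => ∀ v, ∃ u, g (v, u) = true))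
  have hcrossE : Fintype.card {e // Cross S e} = (Sᶜ).card * S.card := by
    rw [← Fintype.card_congr (crossEquiv S), Fintype.card_prod, Fintype.card_coe,
      Fintype.card_coe]
  have hrest : Nat.card ({e // ¬ Cross S e} → Bool)
      = 2 ^ ((Fintype.card V).choose 2 - (Sᶜ).card * S.card) := by
    rw [Nat.card_eq_fintype_card, Fintype.card_fun, Fintype.card_bool,
      Fintype.card_subtype_compl, hcrossE, Sym2.card_subtype_not_diag]
  rw [Nat.card_congr e2, Nat.card_prod, card_good, hrest]

/-- The number of cross pairs is at most the total number of potential edges. -/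
theorem cross_card_add (S : Finset V) :
    (Sᶜ).card * S.card ≤ (Fintype.card V).choose 2 := by
  classical
  have hcrossE : Fintype.card {e // Cross S e} = (Sᶜ).card * S.card := by
    rw [← Fintype.card_congr (crossEquiv S), Fintype.card_prod, Fintype.card_coe,
      Fintype.card_coe]
  rw [← hcrossE, ← Sym2.card_subtype_not_diag (α := V)]
  exact Fintype.card_subtype_le _

end Aux

open scoped Classical in
theorem sum_count_eq (n p : ℕ) :
    (∑ G : SimpleGraph (Fin n),
        Nat.card {S : Finset (Fin n) // S.card = p ∧ IsDomSet G S})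
      = n.choose p * ((2 ^ p - 1) ^ (n - p) * 2 ^ (n.choose 2 - (n - p) * p)) := by
  classical
  have hG : ∀ G : SimpleGraph (Fin n),
      Nat.card {S : Finset (Fin n) // S.card = p ∧ IsDomSet G S}
        = ∑ S ∈ Finset.univ.powersetCard p, if IsDomSet G S then 1 else 0 := by
    intro G
    rw [Nat.card_eq_fintype_card, Fintype.card_subtype, ← Finset.filter_filter,
      ← Finset.powerset_univ, ← Finset.powersetCard_eq_filter, Finset.card_filter]
  calc ∑ G : SimpleGraph (Fin n),
        Nat.card {S : Finset (Fin n) // S.card = p ∧ IsDomSet G S}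
      = ∑ G : SimpleGraph (Fin n), ∑ S ∈ Finset.univ.powersetCard p,
          if IsDomSet G S then 1 else 0 := by simp_rw [hG]
    _ = ∑ S ∈ Finset.univ.powersetCard p, ∑ G : SimpleGraph (Fin n),
          if IsDomSet G S then 1 else 0 := Finset.sum_comm
    _ = ∑ S ∈ Finset.univ.powersetCard p,
          ((2 ^ p - 1) ^ (n - p) * 2 ^ (n.choose 2 - (n - p) * p)) := by
        refine Finset.sum_congr rfl fun S hS => ?_
        rw [Finset.mem_powersetCard_univ] at hS
        rw [← Finset.card_filter, ← Fintype.card_subtype, ← Nat.card_eq_fintype_card,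
          card_dom S, Finset.card_compl, Fintype.card_fin, hS]
    _ = n.choose p * ((2 ^ p - 1) ^ (n - p) * 2 ^ (n.choose 2 - (n - p) * p)) := by
        rw [Finset.sum_const, Finset.card_powersetCard, Finset.card_univ, Fintype.card_fin,
          smul_eq_mul]

theorem le_choose_two (n p : ℕ) : (n - p) * p ≤ n.choose 2 := by
  rcases le_or_gt p n with hp | hp
  · obtain ⟨S, -, hS⟩ := Finset.exists_subset_card_eq (s := (Finset.univ : Finset (Fin n))) (n := p)
      (by simpa using hp)
    have := cross_card_add S
    rwa [Finset.card_compl, Fintype.card_fin, hS] at this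
  · simp [Nat.sub_eq_zero_of_le hp.le]

theorem part1 (n p : ℕ) :
    (∑ G : SimpleGraph (Fin n),
        (Nat.card {S : Finset (Fin n) // S.card = p ∧ IsDomSet G S} : ℝ))
          / 2 ^ n.choose 2
      = (n.choose p : ℝ) * (1 - (1 / 2 : ℝ) ^ p) ^ (n - p) := by
  classical
  have hm : (n - p) * p ≤ n.choose 2 := le_choose_two n p
  have h2p : (1 : ℕ) ≤ 2 ^ p := Nat.one_le_two_pow
  rw [← Nat.cast_sum, sum_count_eq]
  push_cast [Nat.cast_sub h2p]
  rw [pow_sub₀ (2 : ℝ) two_ne_zero hm]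
  have key : (1 - (1 / 2 : ℝ) ^ p) = ((2 : ℝ) ^ p - 1) / 2 ^ p := by
    rw [div_pow, one_pow, eq_div_iff (pow_ne_zero _ two_ne_zero), sub_mul,
      one_mul, one_div, inv_mul_cancel₀ (pow_ne_zero _ two_ne_zero)]
  rw [key, div_pow, ← pow_mul, mul_comm p (n - p)]
  have h1 : ((2 : ℝ) ^ ((n - p) * p)) ≠ 0 := pow_ne_zero _ two_ne_zero
  have h2 : ((2 : ℝ) ^ n.choose 2) ≠ 0 := pow_ne_zero _ two_ne_zero
  field_simp

open Real Filter in
theorem Hlim (ε : ℝ) (hε : 0 < ε) :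
    Tendsto (fun x : ℝ => Real.log x ^ 2 / Real.log 2 - x ^ ε / 2) atTop atBot := by
  have hlog2 : (0 : ℝ) < Real.log 2 := Real.log_pos one_lt_two
  have hdiv : Tendsto (fun x : ℝ => Real.log x ^ 2 / x ^ ε) atTop (nhds 0) := by
    have := (isLittleO_log_rpow_rpow_atTop 2 hε).tendsto_div_nhds_zero
    refine this.congr (fun x => ?_)
    have : Real.log x ^ (2 : ℝ) = Real.log x ^ (2 : ℕ) := by
      rw [← Real.rpow_natCast (Real.log x) 2]; norm_num
    rw [this]
  have h1 : Tendsto (fun x : ℝ => Real.log x ^ 2 / Real.log 2 / x ^ ε - 1 / 2) atTop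
      (nhds (-(1 / 2))) := by
    have := (hdiv.div_const (Real.log 2)).sub_const (1 / 2)
    simpa [div_right_comm] using this
  have h2 : Tendsto (fun x : ℝ =>
      x ^ ε * (Real.log x ^ 2 / Real.log 2 / x ^ ε - 1 / 2)) atTop atBot :=
    (tendsto_rpow_atTop hε).atTop_mul_neg (by norm_num) h1
  refine h2.congr' ?_
  filter_upwards [eventually_gt_atTop 0] with x hx
  have hxε : x ^ ε ≠ 0 := (Real.rpow_pos_of_pos hx ε).ne'
  field_simp

theorem p_le (ε : ℝ) (hε0 : 0 < ε) (hε1 : ε < 1) (p : ℕ → ℕ)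
    (hp : ∀ n, p n = ⌊(1 - ε) * Real.logb 2 n⌋₊) (n : ℕ) : p n ≤ n := by
  rcases Nat.eq_zero_or_pos n with rfl | hn
  · simp [hp]
  have hn1 : (1 : ℝ) ≤ n := by exact_mod_cast hn
  have hlogb : Real.logb 2 n ≤ n := by
    rw [Real.logb_le_iff_le_rpow one_lt_two (by linarith)]
    rw [Real.rpow_natCast]
    exact_mod_cast (Nat.lt_two_pow_self (n := n)).le
  have h1 : (1 - ε) * Real.logb 2 n ≤ (n : ℝ) := by
    have hlb : 0 ≤ Real.logb 2 n := Real.logb_nonneg one_lt_two hn1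
    nlinarith
  rw [hp]
  calc ⌊(1 - ε) * Real.logb 2 n⌋₊ ≤ ⌊(n : ℝ)⌋₊ := Nat.floor_le_floor h1
    _ = n := Nat.floor_natCast n

open Real Filter in
theorem part2 (ε : ℝ) (hε0 : 0 < ε) (hε1 : ε < 1) (p : ℕ → ℕ)
    (hp : ∀ n, p n = ⌊(1 - ε) * Real.logb 2 n⌋₊) :
    Tendsto (fun n : ℕ => (n.choose (p n) : ℝ) * (1 - (1 / 2 : ℝ) ^ p n) ^ (n - p n))
      atTop (nhds 0) := by
  have hlog2 : (0 : ℝ) < Real.log 2 := Real.log_pos one_lt_two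
  set f := fun n : ℕ => (n.choose (p n) : ℝ) * (1 - (1 / 2 : ℝ) ^ p n) ^ (n - p n) with hf
  have hbase : ∀ n : ℕ, 0 ≤ 1 - (1 / 2 : ℝ) ^ p n := by
    intro n
    have : (1 / 2 : ℝ) ^ p n ≤ 1 := pow_le_one₀ (by norm_num) (by norm_num)
    linarith
  have hf0 : ∀ n, 0 ≤ f n := fun n =>
    mul_nonneg (Nat.cast_nonneg _) (pow_nonneg (hbase n) _)
  set g := fun n : ℕ =>
    (p n : ℝ) * Real.log n - ((n : ℕ) - p n : ℕ) * (1 / 2 : ℝ) ^ p n with hg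
  have hfg : ∀ᶠ n : ℕ in atTop, f n ≤ Real.exp (g n) := by
    filter_upwards [eventually_ge_atTop 1] with n hn
    have hn0 : (0 : ℝ) < n := by exact_mod_cast hn
    have h1 : (n.choose (p n) : ℝ) ≤ Real.exp ((p n : ℝ) * Real.log n) := by
      calc (n.choose (p n) : ℝ) ≤ (n : ℝ) ^ p n := by exact_mod_cast Nat.choose_le_pow n (p n)
        _ = Real.exp ((p n : ℝ) * Real.log n) := by
            rw [← Real.log_pow, Real.exp_log (pow_pos hn0 _)]
    have h2 : (1 - (1 / 2 : ℝ) ^ p n) ^ (n - p n)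
        ≤ Real.exp (-(((n - p n : ℕ) : ℝ) * (1 / 2 : ℝ) ^ p n)) := by
      have hle : 1 - (1 / 2 : ℝ) ^ p n ≤ Real.exp (-(1 / 2 : ℝ) ^ p n) := by
        have := Real.add_one_le_exp (-(1 / 2 : ℝ) ^ p n)
        linarith
      calc (1 - (1 / 2 : ℝ) ^ p n) ^ (n - p n)
          ≤ (Real.exp (-(1 / 2 : ℝ) ^ p n)) ^ (n - p n) :=
            pow_le_pow_left₀ (hbase n) hle _
        _ = Real.exp (-(((n - p n : ℕ) : ℝ) * (1 / 2 : ℝ) ^ p n)) := by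
            rw [← Real.exp_nat_mul]; ring_nf
    calc f n ≤ Real.exp ((p n : ℝ) * Real.log n)
          * Real.exp (-(((n - p n : ℕ) : ℝ) * (1 / 2 : ℝ) ^ p n)) :=
        mul_le_mul h1 h2 (pow_nonneg (hbase n) _) (Real.exp_nonneg _)
      _ = Real.exp (g n) := by rw [← Real.exp_add]; rw [hg]; ring_nf
  have hgH : ∀ᶠ n : ℕ in atTop,
      g n ≤ Real.log n ^ 2 / Real.log 2 - (n : ℝ) ^ ε / 2 := by
    have hev : ∀ᶠ x : ℝ in atTop, ‖Real.log x‖ ≤ Real.log 2 / 2 * ‖x‖ :=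
      Real.isLittleO_log_id_atTop.bound (by positivity)
    filter_upwards [eventually_ge_atTop 1,
      tendsto_natCast_atTop_atTop.eventually hev] with n hn hlogn
    have hn0 : (0 : ℝ) < n := by exact_mod_cast hn
    have hn1 : (1 : ℝ) ≤ n := by exact_mod_cast hn
    have hlogpos : 0 ≤ Real.log n := Real.log_nonneg hn1
    rw [Real.norm_eq_abs, Real.norm_eq_abs, abs_of_nonneg hlogpos,
      abs_of_nonneg hn0.le] at hlogn
    have hplogb : (p n : ℝ) ≤ Real.logb 2 n := by
      rw [hp n]
      have hlb : 0 ≤ Real.logb 2 n := Real.logb_nonneg one_lt_two hn1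
      calc (⌊(1 - ε) * Real.logb 2 n⌋₊ : ℝ) ≤ (1 - ε) * Real.logb 2 n :=
          Nat.floor_le (by nlinarith)
        _ ≤ Real.logb 2 n := by nlinarith
    have t1 : (p n : ℝ) * Real.log n ≤ Real.log n ^ 2 / Real.log 2 := by
      have := mul_le_mul_of_nonneg_right hplogb hlogpos
      calc (p n : ℝ) * Real.log n ≤ Real.logb 2 n * Real.log n := this
        _ = Real.log n ^ 2 / Real.log 2 := by
            rw [Real.logb, div_mul_eq_mul_div]; ring_nf
    have hple : (p n : ℝ) ≤ (1 - ε) * Real.logb 2 n := by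
      rw [hp n]
      exact Nat.floor_le (by nlinarith [Real.logb_nonneg one_lt_two hn1])
    have h2p : (2 : ℝ) ^ p n ≤ (n : ℝ) ^ (1 - ε : ℝ) := by
      calc (2 : ℝ) ^ p n = (2 : ℝ) ^ ((p n : ℕ) : ℝ) := (Real.rpow_natCast 2 (p n)).symm
        _ ≤ (2 : ℝ) ^ ((1 - ε) * Real.logb 2 n) :=
            Real.rpow_le_rpow_of_exponent_le one_le_two hple
        _ = ((2 : ℝ) ^ Real.logb 2 n) ^ (1 - ε : ℝ) := by
            rw [← Real.rpow_mul (by norm_num), mul_comm]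
        _ = (n : ℝ) ^ (1 - ε : ℝ) := by
            rw [Real.rpow_logb (by norm_num) (by norm_num) hn0]
    have hhalf : (1 / 2 : ℝ) ^ p n ≥ (n : ℝ) ^ (ε - 1 : ℝ) := by
      have hpow : (1 / 2 : ℝ) ^ p n = ((2 : ℝ) ^ p n)⁻¹ := by
        rw [div_pow, one_pow, one_div]
      rw [hpow, ge_iff_le, show (ε - 1 : ℝ) = -(1 - ε) by ring,
        Real.rpow_neg hn0.le]
      exact inv_anti₀ (by positivity) h2p
    have hnp : (n : ℝ) / 2 ≤ ((n - p n : ℕ) : ℝ) := by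
      have hpn : p n ≤ n := p_le ε hε0 hε1 p hp n
      rw [Nat.cast_sub hpn]
      have : (p n : ℝ) ≤ (n : ℝ) / 2 := by
        refine hplogb.trans ?_
        rw [Real.logb, div_le_div_iff₀ hlog2 two_pos] at *
        nlinarith
      linarith
    have t2 : (n : ℝ) ^ ε / 2 ≤ ((n - p n : ℕ) : ℝ) * (1 / 2 : ℝ) ^ p n := by
      have hmul : (n : ℝ) / 2 * (n : ℝ) ^ (ε - 1 : ℝ)
          ≤ ((n - p n : ℕ) : ℝ) * (1 / 2 : ℝ) ^ p n := by
        apply mul_le_mul hnp hhalf (Real.rpow_pos_of_pos hn0 _).le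
        positivity
      refine le_trans (le_of_eq ?_) hmul
      have hne : (1 : ℝ) + (ε - 1) ≠ 0 := by
        rw [show (1 : ℝ) + (ε - 1) = ε by ring]; exact hε0.ne'
      rw [div_mul_eq_mul_div, ← Real.rpow_one_add' hn0.le hne,
        show (1 : ℝ) + (ε - 1) = ε by ring]
    rw [hg]
    linarith
  have hH : Tendsto (fun n : ℕ => Real.log n ^ 2 / Real.log 2 - (n : ℝ) ^ ε / 2)
      atTop atBot := (Hlim ε hε0).comp tendsto_natCast_atTop_atTop
  have hexp : Tendsto (fun n : ℕ =>
      Real.exp (Real.log n ^ 2 / Real.log 2 - (n : ℝ) ^ ε / 2)) atTop (nhds 0) :=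
    Real.tendsto_exp_atBot.comp hH
  refine squeeze_zero' (Eventually.of_forall hf0) ?_ hexp
  filter_upwards [hfg, hgH] with n h1 h2
  exact h1.trans (Real.exp_le_exp.mpr h2)

theorem exists_dom_of_domNumber_le {V : Type*} [Fintype V] [DecidableEq V]
    (G : SimpleGraph V) (q : ℕ)
    (hpn : q ≤ Fintype.card V) (h : domNumber G ≤ q) :
    ∃ S : Finset V, S.card = q ∧ IsDomSet G S := by
  classical
  have hne : {k | ∃ S : Finset V, S.card = k ∧ IsDomSet G S}.Nonempty :=
    ⟨(Finset.univ : Finset V).card, Finset.univ, rfl, fun v hv => absurd (Finset.mem_univ v) hv⟩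
  obtain ⟨S₀, hS₀card, hS₀dom⟩ := Nat.sInf_mem hne
  obtain ⟨S, hsub, -, hScard⟩ := Finset.exists_subsuperset_card_eq (n := q)
    (Finset.subset_univ S₀) (by rw [hS₀card]; exact h)
    (by rwa [Finset.card_univ])
  refine ⟨S, hScard, fun v hv => ?_⟩
  obtain ⟨u, hu, hadj⟩ := hS₀dom v (fun hmem => hv (hsub hmem))
  exact ⟨u, hsub hu, hadj⟩

theorem card_le_sum (n q : ℕ) (hpn : q ≤ n) :
    Nat.card {G : SimpleGraph (Fin n) // domNumber G ≤ q}
      ≤ ∑ G : SimpleGraph (Fin n),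
          Nat.card {S : Finset (Fin n) // S.card = q ∧ IsDomSet G S} := by
  classical
  rw [Nat.card_eq_fintype_card, Fintype.card_subtype]
  calc #(Finset.univ.filter fun G : SimpleGraph (Fin n) => domNumber G ≤ q)
      = ∑ G ∈ Finset.univ.filter (fun G : SimpleGraph (Fin n) => domNumber G ≤ q), 1 :=
        (Finset.card_eq_sum_ones _)
    _ ≤ ∑ G ∈ Finset.univ.filter (fun G : SimpleGraph (Fin n) => domNumber G ≤ q),
          Nat.card {S : Finset (Fin n) // S.card = q ∧ IsDomSet G S} := by
        refine Finset.sum_le_sum fun G hG => ?_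
        rw [Finset.mem_filter] at hG
        obtain ⟨S, hS⟩ := exists_dom_of_domNumber_le G q
          (by rwa [Fintype.card_fin]) hG.2
        have : Nonempty {S : Finset (Fin n) // S.card = q ∧ IsDomSet G S} := ⟨⟨S, hS⟩⟩
        exact Nat.card_pos
    _ ≤ ∑ G : SimpleGraph (Fin n),
          Nat.card {S : Finset (Fin n) // S.card = q ∧ IsDomSet G S} :=
        Finset.sum_le_sum_of_subset (Finset.filter_subset _ _)


/-- in `G(n, 1/2)`, the expected number of dominating sets of
size `p = ⌊(1-ε) log₂ n⌋` equals `C(n,p)·(1 - 2^{-p})^{n-p}`, this quantity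
tends to `0`, and consequently the proportion of graphs on `n` vertices with
`γ ≤ p` tends to `0` (i.e. a.a.s. `γ(G(n,1/2)) > (1-ε) log₂ n`). -/
theorem random_dom_lower (ε : ℝ) (hε0 : 0 < ε) (hε1 : ε < 1)
    (p : ℕ → ℕ) (hp : ∀ n, p n = ⌊(1 - ε) * Real.logb 2 n⌋₊) :
    (∀ n : ℕ,
        (∑ G : SimpleGraph (Fin n),
            (Nat.card {S : Finset (Fin n) // S.card = p n ∧ IsDomSet G S} : ℝ))
              / 2 ^ n.choose 2
          = (n.choose (p n) : ℝ) * (1 - (1 / 2 : ℝ) ^ p n) ^ (n - p n)) ∧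
      Filter.Tendsto
        (fun n : ℕ => (n.choose (p n) : ℝ) * (1 - (1 / 2 : ℝ) ^ p n) ^ (n - p n))
        Filter.atTop (nhds 0) ∧
      Filter.Tendsto
        (fun n : ℕ =>
          (Nat.card {G : SimpleGraph (Fin n) // domNumber G ≤ p n} : ℝ) / 2 ^ n.choose 2)
        Filter.atTop (nhds 0) := by
  refine ⟨fun n => part1 n (p n), part2 ε hε0 hε1 p hp, ?_⟩
  refine squeeze_zero' (Filter.Eventually.of_forall fun n => by positivity)
    (Filter.Eventually.of_forall fun n => ?_) (part2 ε hε0 hε1 p hp)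
  calc (Nat.card {G : SimpleGraph (Fin n) // domNumber G ≤ p n} : ℝ) / 2 ^ n.choose 2
      ≤ (∑ G : SimpleGraph (Fin n),
          (Nat.card {S : Finset (Fin n) // S.card = p n ∧ IsDomSet G S} : ℝ))
            / 2 ^ n.choose 2 := by
        have h := card_le_sum n (p n) (p_le ε hε0 hε1 p hp n)
        gcongr
        exact_mod_cast h
    _ = (n.choose (p n) : ℝ) * (1 - (1 / 2 : ℝ) ^ p n) ^ (n - p n) := part1 n (p n)

end SG
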